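/- Let b' ∈ GL_n(K) with Hodge point μ(b')_1 ≥ … ≥ μ(b')_n, and let N be a positive integer with N > μ(b')_1 − μ(b')_n. Then for every g ∈ GL_n(W(k)) with g ≡ 1 (mod p^N) (entrywise congruence of matrices over W(k)) one has b'⁻¹·g·b' ∈ GL_n(W(k)), and consequently μ(b·g·b') = μ(b·b') for every b ∈ GL_n(K). -/

import Mathlib

/-!
Statement 0.  Setting: `p` prime, `κ` algebraically closed of characteristic `p`,
`𝕎 = W(κ)` the Witt vectors, `K = Frac(W(κ))`.  The Hodge point `μ(b)` of
`b ∈ GL_n(K)` is the unique decreasing integer tuple with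
`b = c₁ ⬝ diag(p^{μ₁},…,p^{μₙ}) ⬝ c₂`, `c₁, c₂ ∈ GL_n(W(κ))`.

If `b' ∈ GL_n(K)` has Hodge point `μ'` and `N > μ'₁ − μ'ₙ`, then for every
`g ∈ GL_n(W(κ))` with `g ≡ 1 (mod p^N)` one has `b'⁻¹ g b' ∈ GL_n(W(κ))` and
consequently `μ(b·g·b') = μ(b·b')` for every `b ∈ GL_n(K)`.
-/

open Matrix

noncomputable section

variable (p : ℕ) [Fact p.Prime] (κ : Type) [Field κ] [IsAlgClosed κ] [CharP κ p]

local notation "𝕎" => WittVector p κ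
local notation "K" => FractionRing (WittVector p κ)

/-- `c ∈ GL_n(W(κ)) ⊆ GL_n(K)`: `c` is the image of a matrix over `W(κ)` whose
determinant is a unit of `W(κ)`. -/
def IsIntegralUnit {n : ℕ} (c : Matrix (Fin n) (Fin n) K) : Prop :=
  ∃ d : Matrix (Fin n) (Fin n) 𝕎, IsUnit d.det ∧ c = d.map (algebraMap 𝕎 K)

/-- `μ` is the Hodge point of `b`: `μ` is decreasing and
`b = c₁ ⬝ diag(p^{μ i}) ⬝ c₂` with `c₁, c₂ ∈ GL_n(W(κ))`. -/
def IsHodgePoint {n : ℕ} (b : Matrix (Fin n) (Fin n) K) (μ : Fin n → ℤ) : Prop :=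
  Antitone μ ∧ ∃ c₁ c₂ : Matrix (Fin n) (Fin n) K, IsIntegralUnit p κ c₁ ∧ IsIntegralUnit p κ c₂ ∧
    b = c₁ * Matrix.diagonal (fun i => (p : K) ^ (μ i)) * c₂

set_option linter.unusedSectionVars false

theorem IsIntegralUnit.det_isUnit {n : ℕ} {c : Matrix (Fin n) (Fin n) K}
    (h : IsIntegralUnit p κ c) : IsUnit c.det := by
  obtain ⟨d, hd, rfl⟩ := h
  have h2 := hd.map (algebraMap 𝕎 K)
  rwa [RingHom.map_det, RingHom.mapMatrix_apply] at h2

theorem IsIntegralUnit.mul {n : ℕ} {c c' : Matrix (Fin n) (Fin n) K}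
    (h : IsIntegralUnit p κ c) (h' : IsIntegralUnit p κ c') : IsIntegralUnit p κ (c * c') := by
  obtain ⟨d, hd, rfl⟩ := h; obtain ⟨d', hd', rfl⟩ := h'
  exact ⟨d * d', by rw [Matrix.det_mul]; exact hd.mul hd', (Matrix.map_mul).symm⟩

theorem map_inv_comm {n : ℕ} (d : Matrix (Fin n) (Fin n) 𝕎) (hd : IsUnit d.det) :
    (d.map (algebraMap 𝕎 K))⁻¹ = d⁻¹.map (algebraMap 𝕎 K) := by
  apply Matrix.inv_eq_right_inv
  rw [← Matrix.map_mul, Matrix.mul_nonsing_inv _ hd,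
    Matrix.map_one _ (map_zero _) (map_one _)]

theorem IsIntegralUnit.inv {n : ℕ} {c : Matrix (Fin n) (Fin n) K}
    (h : IsIntegralUnit p κ c) : IsIntegralUnit p κ c⁻¹ := by
  obtain ⟨d, hd, rfl⟩ := h
  refine ⟨d⁻¹, ?_, (map_inv_comm p κ d hd)⟩
  have : d⁻¹.det * d.det = 1 := by
    rw [← Matrix.det_mul, Matrix.nonsing_inv_mul _ hd, Matrix.det_one]
  exact IsUnit.of_mul_eq_one _ this

theorem isHodgePoint_mul_right {n : ℕ} {x u : Matrix (Fin n) (Fin n) K}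
    (hu : IsIntegralUnit p κ u) (μ : Fin n → ℤ) (h : IsHodgePoint p κ x μ) :
    IsHodgePoint p κ (x * u) μ := by
  obtain ⟨hμ, c₁, c₂, h₁, h₂, rfl⟩ := h
  exact ⟨hμ, c₁, c₂ * u, h₁, h₂.mul p κ hu, by rw [mul_assoc]⟩

theorem isHodgePoint_mul_right_iff {n : ℕ} {x u : Matrix (Fin n) (Fin n) K}
    (hu : IsIntegralUnit p κ u) (μ : Fin n → ℤ) :
    IsHodgePoint p κ (x * u) μ ↔ IsHodgePoint p κ x μ := by
  constructor
  · intro h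
    have h2 := isHodgePoint_mul_right p κ (hu.inv p κ) μ h
    rwa [mul_assoc, Matrix.mul_nonsing_inv _ (hu.det_isUnit p κ), mul_one] at h2
  · exact isHodgePoint_mul_right p κ hu μ

theorem dvd_mul_matrix {n : ℕ} {a : 𝕎} {M : Matrix (Fin n) (Fin n) 𝕎}
    (hM : ∀ i j, a ∣ M i j) (P Q : Matrix (Fin n) (Fin n) 𝕎) (i j : Fin n) :
    a ∣ (P * M * Q) i j := by
  simp only [Matrix.mul_apply]
  exact Finset.dvd_sum fun k _ =>
    Dvd.dvd.mul_right (Finset.dvd_sum fun l _ => (hM l k).mul_left _) _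


theorem statement_0 (n : ℕ) (hn : 0 < n)
    (b' : Matrix (Fin n) (Fin n) K) (hb' : IsUnit b'.det)
    (μ' : Fin n → ℤ) (hμ' : IsHodgePoint p κ b' μ')
    (N : ℕ) (hN0 : 0 < N)
    (hN : (N : ℤ) > μ' ⟨0, hn⟩ - μ' ⟨n - 1, by omega⟩)
    (g : Matrix (Fin n) (Fin n) 𝕎) (hg : IsUnit g.det)
    (hcong : ∀ i j, (p : 𝕎) ^ N ∣ (g i j - (1 : Matrix (Fin n) (Fin n) 𝕎) i j)) :
    IsIntegralUnit p κ (b'⁻¹ * g.map (algebraMap 𝕎 K) * b') ∧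
    ∀ b : Matrix (Fin n) (Fin n) K, IsUnit b.det →
      ∀ μ : Fin n → ℤ,
        IsHodgePoint p κ (b * g.map (algebraMap 𝕎 K) * b') μ ↔ IsHodgePoint p κ (b * b') μ := by
  classical
  have hp : (p : K) ≠ 0 := WittVector.FractionRing.p_nonzero p κ
  obtain ⟨hanti, c₁, c₂, hc₁, hc₂, hb'eq⟩ := hμ'
  obtain ⟨d₁, hd₁, rfl⟩ := hc₁
  obtain ⟨d₂, hd₂, rfl⟩ := hc₂
  set D : Matrix (Fin n) (Fin n) K := Matrix.diagonal (fun i => (p : K) ^ (μ' i)) with hD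
  set D' : Matrix (Fin n) (Fin n) K := Matrix.diagonal (fun i => (p : K) ^ (-μ' i)) with hD'
  have hDD' : D * D' = 1 := by
    rw [hD, hD', Matrix.diagonal_mul_diagonal]
    have h1 : (fun i => (p:K) ^ (μ' i) * (p:K) ^ (-μ' i)) = fun _ : Fin n => (1:K) := by
      funext i; rw [← zpow_add₀ hp]; simp
    rw [h1, Matrix.diagonal_one]
  have hDinv : D⁻¹ = D' := Matrix.inv_eq_right_inv hDD'
  have hDdet : IsUnit D.det := by
    have h1 : D.det * D'.det = 1 := by rw [← Matrix.det_mul, hDD', Matrix.det_one]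
    exact IsUnit.of_mul_eq_one _ h1
  have hbound : ∀ i j : Fin n, 0 ≤ (N : ℤ) + μ' j - μ' i := by
    intro i j
    have h1 : μ' i ≤ μ' ⟨0, hn⟩ := hanti (by simp [Fin.le_def])
    have h2 : μ' ⟨n - 1, by omega⟩ ≤ μ' j := hanti (by simp [Fin.le_def]; omega)
    omega
  have hdvd : ∀ i j, (p:𝕎)^N ∣ (d₁⁻¹ * (g - 1) * d₁) i j :=
    dvd_mul_matrix p κ hcong d₁⁻¹ d₁
  choose w hw using hdvd
  set hm : Matrix (Fin n) (Fin n) 𝕎 := d₁⁻¹ * (g - 1) * d₁ with hhm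
  have hmeq : d₁⁻¹ * g * d₁ = 1 + hm := by
    have h1 : hm = d₁⁻¹ * g * d₁ - 1 := by
      rw [hhm, Matrix.mul_sub, Matrix.sub_mul, Matrix.mul_one,
        Matrix.nonsing_inv_mul _ hd₁]
    rw [h1]; abel
  set e : Matrix (Fin n) (Fin n) 𝕎 := Matrix.of fun i j =>
    (1 : Matrix (Fin n) (Fin n) 𝕎) i j + (p:𝕎) ^ ((N : ℤ) + μ' j - μ' i).toNat * w i j with he
  have hkey : ∀ i j, algebraMap 𝕎 K (e i j)
      = (p:K)^(-μ' i) * algebraMap 𝕎 K ((1 + hm) i j) * (p:K)^(μ' j) := by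
    intro i j
    rw [Matrix.add_apply, hw i j, he]
    simp only [Matrix.of_apply, _root_.map_add, _root_.map_mul, _root_.map_pow, map_natCast]
    by_cases hij : i = j
    · subst hij
      rw [Matrix.one_apply_eq, _root_.map_one]
      rw [show ((N:ℤ) + μ' i - μ' i).toNat = N by omega]
      rw [show (p:K)^(-μ' i) * ((1:K) + (p:K)^N * algebraMap 𝕎 K (w i i)) * (p:K)^(μ' i)
          = ((p:K)^(-μ' i) * (p:K)^(μ' i)) * ((1:K) + (p:K)^N * algebraMap 𝕎 K (w i i)) by ring]
      rw [← zpow_add₀ hp]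
      simp
    · rw [Matrix.one_apply_ne hij, map_zero, zero_add, zero_add]
      rw [show (p:K)^(-μ' i) * ((p:K)^N * algebraMap 𝕎 K (w i j)) * (p:K)^(μ' j)
          = ((p:K)^(-μ' i) * (p:K)^((N:ℤ)) * (p:K)^(μ' j)) * algebraMap 𝕎 K (w i j) by
            rw [zpow_natCast]; ring]
      rw [← zpow_add₀ hp, ← zpow_add₀ hp]
      rw [← zpow_natCast (p:K) (((N:ℤ) + μ' j - μ' i).toNat), Int.toNat_of_nonneg (hbound i j)]
      ring_nf
  have hc₁det : IsUnit (d₁.map (algebraMap 𝕎 K)).det := by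
    have h2 := hd₁.map (algebraMap 𝕎 K)
    rwa [RingHom.map_det, RingHom.mapMatrix_apply] at h2
  have hmid : D' * ((1 + hm).map (algebraMap 𝕎 K)) * D = e.map (algebraMap 𝕎 K) := by
    ext i j
    rw [hD, hD', Matrix.map_apply, Matrix.mul_diagonal, Matrix.diagonal_mul, Matrix.map_apply]
    exact (hkey i j).symm
  have hedet : e.det = g.det := by
    apply IsFractionRing.injective 𝕎 K
    rw [RingHom.map_det, RingHom.map_det, RingHom.mapMatrix_apply, RingHom.mapMatrix_apply]
    rw [← hmid, ← hDinv,
      Matrix.det_conj' ((Matrix.isUnit_iff_isUnit_det D).mpr hDdet), ← hmeq,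
      Matrix.map_mul, Matrix.map_mul, ← map_inv_comm p κ d₁ hd₁,
      Matrix.det_conj' ((Matrix.isUnit_iff_isUnit_det _).mpr hc₁det)]
  have hudet : IsUnit (d₂⁻¹ * e * d₂).det := by
    rw [Matrix.det_conj' ((Matrix.isUnit_iff_isUnit_det d₂).mpr hd₂), hedet]
    exact hg
  have hueq : b'⁻¹ * g.map (algebraMap 𝕎 K) * b' = (d₂⁻¹ * e * d₂).map (algebraMap 𝕎 K) := by
    rw [Matrix.map_mul, Matrix.map_mul, ← hmid, ← hmeq, Matrix.map_mul, Matrix.map_mul,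
      ← map_inv_comm p κ d₁ hd₁, ← map_inv_comm p κ d₂ hd₂, ← hDinv, hb'eq,
      Matrix.mul_inv_rev, Matrix.mul_inv_rev]
    simp only [Matrix.mul_assoc]
  have hu : IsIntegralUnit p κ (b'⁻¹ * g.map (algebraMap 𝕎 K) * b') :=
    ⟨d₂⁻¹ * e * d₂, hudet, hueq⟩
  refine ⟨hu, ?_⟩
  intro b hb μ
  have hbg : (b * b') * (b'⁻¹ * g.map (algebraMap 𝕎 K) * b') = b * g.map (algebraMap 𝕎 K) * b' := by
    have h1 : b' * (b'⁻¹ * g.map (algebraMap 𝕎 K) * b') = g.map (algebraMap 𝕎 K) * b' := by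
      rw [← Matrix.mul_assoc, ← Matrix.mul_assoc, Matrix.mul_nonsing_inv _ hb', Matrix.one_mul]
    calc (b * b') * (b'⁻¹ * g.map (algebraMap 𝕎 K) * b')
        = b * (b' * (b'⁻¹ * g.map (algebraMap 𝕎 K) * b')) := by rw [Matrix.mul_assoc]
      _ = b * (g.map (algebraMap 𝕎 K) * b') := by rw [h1]
      _ = b * g.map (algebraMap 𝕎 K) * b' := by rw [Matrix.mul_assoc]
  rw [← hbg]
  exact isHodgePoint_mul_right_iff p κ hu μ


end
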